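/- Let α be a nonempty finite type and let C be a convex set of probability vectors on α. Suppose q* ∈ C has q* i > 0 for every i and maximizes Shannon entropy over C. Then: (i) for every probability vector p on α with p i > 0 for all i, there exists q ∈ C with -∑_i q i * log(p i) >= H(q*); and (ii) for every q ∈ C, -∑_i q i * log(q* i) <= H(q*). Consequently the minimax value min over full-support p of sup over q ∈ C of cross entropy CE(q,p) equals H(q*), attained at p = q*. -/

import Mathlib

/-- Cross entropy of `q` relative to `p`: `CE(q,p) = -∑ i, q i * log (p i)`. -/
noncomputable def crossEnt {α : Type*} [Fintype α] (q p : α → ℝ) : ℝ :=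
  -∑ i, q i * Real.log (p i)

/-- Shannon entropy `H(q) = -∑ i, q i * log (q i)` (with `0 * log 0 = 0` automatic). -/
noncomputable def shEnt {α : Type*} [Fintype α] (q : α → ℝ) : ℝ :=
  -∑ i, q i * Real.log (q i)

/-- Gibbs' inequality. -/
lemma gibbs_aux {α : Type*} [Fintype α] (q p : α → ℝ) (hq : ∀ i, 0 < q i)
    (hp : ∀ i, 0 < p i) (hq1 : ∑ i, q i = 1) (hp1 : ∑ i, p i = 1) :
    ∑ i, q i * Real.log (p i) ≤ ∑ i, q i * Real.log (q i) := by
  have h : ∀ i ∈ Finset.univ, q i * Real.log (p i) - q i * Real.log (q i) ≤ p i - q i := by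
    intro i _
    have hlog := Real.log_le_sub_one_of_pos (div_pos (hp i) (hq i))
    have := mul_le_mul_of_nonneg_left hlog (hq i).le
    rw [Real.log_div (hp i).ne' (hq i).ne'] at this
    have h2a : q i * (p i / q i - 1) = p i - q i := by field_simp [(hq i).ne']
    nlinarith [this]
  have hsum := Finset.sum_le_sum h
  rw [Finset.sum_sub_distrib, Finset.sum_sub_distrib, hq1, hp1] at hsum
  linarith

lemma entropy_deriv_aux {α : Type*} [Fintype α] (a d : α → ℝ) (ha : ∀ i, 0 < a i) :
    HasDerivAt (fun t : ℝ => -∑ i, (a i + t * d i) * Real.log (a i + t * d i))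
      (-∑ i, d i * (Real.log (a i) + 1)) 0 := by
  have h : HasDerivAt (fun t : ℝ => ∑ i, (a i + t * d i) * Real.log (a i + t * d i))
      (∑ i, d i * (Real.log (a i) + 1)) 0 := by
    apply HasDerivAt.fun_sum
    intro i _
    have hinner : HasDerivAt (fun t : ℝ => a i + t * d i) (d i) 0 := by
      simpa using ((hasDerivAt_mul_const (d i)).const_add (a i))
    have houter : HasDerivAt (fun x : ℝ => x * Real.log x) (Real.log (a i) + 1) (a i) :=
      Real.hasDerivAt_mul_log (ha i).ne'
    have hcomp := HasDerivAt.comp (𝕜 := ℝ) 0 (by simpa using houter) hinner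
    rw [mul_comm] at hcomp
    exact hcomp
  exact h.neg

/-- Key step (ii): cross entropy relative to the max-entropy point is at most its entropy. -/
lemma key_aux {α : Type*} [Fintype α] (C : Set (α → ℝ)) (hC : Convex ℝ C)
    (hprob : ∀ q ∈ C, (∀ i, 0 ≤ q i) ∧ ∑ i, q i = 1)
    (qstar : α → ℝ) (hmem : qstar ∈ C) (hpos : ∀ i, 0 < qstar i)
    (hmax : ∀ q ∈ C, shEnt q ≤ shEnt qstar) :
    ∀ q ∈ C, crossEnt q qstar ≤ shEnt qstar := by
  intro q hq
  set d : α → ℝ := fun i => q i - qstar i with hd_def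
  set f : ℝ → ℝ := fun t => -∑ i, (qstar i + t * d i) * Real.log (qstar i + t * d i) with hf_def
  set L : ℝ := -∑ i, d i * (Real.log (qstar i) + 1) with hL_def
  have hf0 : f 0 = shEnt qstar := by simp [hf_def, shEnt]
  have hfle : ∀ t ∈ Set.Ioc (0:ℝ) 1, f t ≤ f 0 := by
    intro t ht
    have hmemt : (fun i => qstar i + t * d i) ∈ C := by
      have := hC hmem hq (by linarith [ht.1.le, ht.2] : (0:ℝ) ≤ 1 - t) ht.1.le (by ring)
      convert this using 1
      funext i
      simp [hd_def, Pi.add_apply, Pi.smul_apply, smul_eq_mul]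
      ring
    have := hmax _ hmemt
    simpa [hf_def, shEnt, hf0] using this.trans_eq hf0.symm
  have hderiv : HasDerivAt f L 0 := entropy_deriv_aux qstar d hpos
  have hL : L ≤ 0 := by
    have h1 : HasDerivWithinAt f L (Set.Ioi 0) 0 := hderiv.hasDerivWithinAt
    rw [hasDerivWithinAt_iff_tendsto_slope] at h1
    have hdiff : Set.Ioi (0:ℝ) \ {0} = Set.Ioi 0 :=
      Set.diff_singleton_eq_self (by simp)
    rw [hdiff] at h1
    have hev : ∀ᶠ t in nhdsWithin (0:ℝ) (Set.Ioi 0), slope f 0 t ≤ 0 := by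
      filter_upwards [Ioc_mem_nhdsGT_of_mem (Set.mem_Ico.mpr ⟨le_refl 0, one_pos⟩)] with t ht
      have hft := hfle t ht
      rw [slope_def_field]
      have : f t - f 0 ≤ 0 := by linarith
      exact div_nonpos_of_nonpos_of_nonneg (by simpa [div_eq_mul_inv] using this) (by simp [ht.1.le])
    exact le_of_tendsto h1 hev
  -- now translate L ≤ 0
  have hsumd : ∑ i, d i = 0 := by
    simp only [hd_def]
    rw [Finset.sum_sub_distrib, (hprob q hq).2, (hprob qstar hmem).2]
    ring
  have hexp : ∑ i, d i * (Real.log (qstar i) + 1)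
      = (∑ i, q i * Real.log (qstar i) - ∑ i, qstar i * Real.log (qstar i)) + ∑ i, d i := by
    rw [← Finset.sum_sub_distrib, ← Finset.sum_add_distrib]
    apply Finset.sum_congr rfl
    intro i _
    simp only [hd_def]
    ring
  simp only [crossEnt, shEnt]
  rw [hL_def, hexp, hsumd] at hL
  linarith [hL]


/-- Finite form of the robust log-loss minimax duality: if `q*` is a full-support
maximum-entropy element of a convex set `C` of probability vectors, then
(i) for every full-support probability vector `p` some `q ∈ C` has cross entropy
at least `H(q*)`; (ii) every `q ∈ C` has cross entropy relative to `q*` at most `H(q*)`;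
consequently the minimax value `min_p sup_{q ∈ C} CE(q,p)` equals `H(q*)`,
attained at `p = q*`. -/
theorem stmt_14 {α : Type*} [Fintype α] [Nonempty α] (C : Set (α → ℝ))
    (hC : Convex ℝ C)
    (hprob : ∀ q ∈ C, (∀ i, 0 ≤ q i) ∧ ∑ i, q i = 1)
    (qstar : α → ℝ) (hmem : qstar ∈ C) (hpos : ∀ i, 0 < qstar i)
    (hmax : ∀ q ∈ C, shEnt q ≤ shEnt qstar) :
    (∀ p : α → ℝ, (∀ i, 0 < p i) → ∑ i, p i = 1 →
        ∃ q ∈ C, shEnt qstar ≤ crossEnt q p) ∧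
    (∀ q ∈ C, crossEnt q qstar ≤ shEnt qstar) ∧
    IsLeast { v : ℝ | ∃ p : α → ℝ, (∀ i, 0 < p i) ∧ (∑ i, p i = 1) ∧
        v = sSup { w : ℝ | ∃ q ∈ C, w = crossEnt q p } } (shEnt qstar) ∧
    sSup { w : ℝ | ∃ q ∈ C, w = crossEnt q qstar } = shEnt qstar := by
  have hq1 := (hprob qstar hmem).2
  -- part (i)
  have part1 : ∀ p : α → ℝ, (∀ i, 0 < p i) → ∑ i, p i = 1 →
      ∃ q ∈ C, shEnt qstar ≤ crossEnt q p := by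
    intro p hp hp1
    refine ⟨qstar, hmem, ?_⟩
    have := gibbs_aux qstar p hpos hp hq1 hp1
    simp only [shEnt, crossEnt]
    linarith
  have part2 : ∀ q ∈ C, crossEnt q qstar ≤ shEnt qstar :=
    key_aux C hC hprob qstar hmem hpos hmax
  -- part (iv)
  have hself : crossEnt qstar qstar = shEnt qstar := rfl
  have hgreat : IsGreatest { w : ℝ | ∃ q ∈ C, w = crossEnt q qstar } (shEnt qstar) := by
    constructor
    · exact ⟨qstar, hmem, hself.symm⟩
    · rintro w ⟨q, hq, rfl⟩
      exact part2 q hq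
  have part4 : sSup { w : ℝ | ∃ q ∈ C, w = crossEnt q qstar } = shEnt qstar :=
    hgreat.csSup_eq
  refine ⟨part1, part2, ?_, part4⟩
  constructor
  · exact ⟨qstar, hpos, hq1, part4.symm⟩
  · rintro v ⟨p, hp, hp1, rfl⟩
    obtain ⟨q, hq, hle⟩ := part1 p hp hp1
    have hbdd : BddAbove { w : ℝ | ∃ q ∈ C, w = crossEnt q p } := by
      refine ⟨∑ i, |Real.log (p i)|, ?_⟩
      rintro w ⟨q', hq', rfl⟩
      have hqn := (hprob q' hq').1
      have hq'1 := (hprob q' hq').2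
      have hle1 : ∀ i, q' i ≤ 1 := by
        intro i
        calc q' i ≤ ∑ j, q' j := Finset.single_le_sum (fun j _ => hqn j) (Finset.mem_univ i)
        _ = 1 := hq'1
      have : ∀ i ∈ Finset.univ, -(q' i * Real.log (p i)) ≤ |Real.log (p i)| := by
        intro i _
        rcases le_or_gt 0 (Real.log (p i)) with h | h
        · have : 0 ≤ q' i * Real.log (p i) := mul_nonneg (hqn i) h
          calc -(q' i * Real.log (p i)) ≤ 0 := by linarith
          _ ≤ |Real.log (p i)| := abs_nonneg _
        · have h1 : -(q' i * Real.log (p i)) = q' i * (-Real.log (p i)) := by ring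
          rw [h1]
          calc q' i * (-Real.log (p i)) ≤ 1 * (-Real.log (p i)) :=
                mul_le_mul_of_nonneg_right (hle1 i) (by linarith)
          _ = -Real.log (p i) := one_mul _
          _ ≤ |Real.log (p i)| := neg_le_abs _
      simp only [crossEnt, ← Finset.sum_neg_distrib]
      exact Finset.sum_le_sum this
    calc shEnt qstar ≤ crossEnt q p := hle
    _ ≤ sSup { w : ℝ | ∃ q ∈ C, w = crossEnt q p } := le_csSup hbdd ⟨q, hq, rfl⟩
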